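/- arXiv:2009.07387 — 2 statements merged into one kernel-verified Lean document; each statement's English description precedes it below -/
import Mathlib

section
/- Let f : [x̲, x̄] → ℝ be a C¹ convex function on an interval with midpoint m and radius ρ > 0. Set y̲ = f(x̲), ȳ = f(x̄), ym = (ȳ + y̲)/2, yr = (ȳ - y̲)/2, and define r(δ) = f(m + ρδ) - (ym + yr·δ) for δ ∈ [-1,1]. Let δ* ∈ [-1,1] satisfy f'(m + ρδ*) = yr/ρ. Then for all δ ∈ [-1,1], r(δ*) ≤ r(δ) ≤ 0, and consequently for every x ∈ [x̲, x̄] there exists ε ∈ [-1,1] with f(x) = ym + (1/2)r(δ*) + yr·((x - m)/ρ) + (1/2)|r(δ*)|·ε. -/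
/-- Tangent line inequality for a convex function. -/
lemma tangent_line_le {S : Set ℝ} {f : ℝ → ℝ} {b a d : ℝ}
    (hfc : ConvexOn ℝ S f) (hb : b ∈ S) (ha : a ∈ S)
    (hd : HasDerivAt f d b) : f b + d * (a - b) ≤ f a := by
  rcases lt_trichotomy a b with h | h | h
  · have := hfc.slope_le_of_hasDerivAt ha hb h hd
    rw [slope_def_field] at this
    have hba : 0 < b - a := by linarith
    rw [div_le_iff₀ hba] at this
    nlinarith
  · simp [h]
  · have := hfc.le_slope_of_hasDerivAt hb ha h hd
    rw [slope_def_field] at this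
    have hab : 0 < a - b := by linarith
    rw [le_div_iff₀ hab] at this
    nlinarith

theorem affine_inclusion_method (xl xu m ρ : ℝ)
    (hm : m = (xl + xu) / 2) (hρ : ρ = (xu - xl) / 2) (hρpos : 0 < ρ)
    (f f' : ℝ → ℝ)
    (hconv : ConvexOn ℝ (Set.Icc xl xu) f)
    (hderiv : ∀ x ∈ Set.Icc xl xu, HasDerivAt f (f' x) x)
    (hcont : ContinuousOn f' (Set.Icc xl xu))
    (yl yu ym yr : ℝ)
    (hyl : yl = f xl) (hyu : yu = f xu)
    (hym : ym = (yu + yl) / 2) (hyr : yr = (yu - yl) / 2)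
    (r : ℝ → ℝ) (hrdef : ∀ δ, r δ = f (m + ρ * δ) - (ym + yr * δ))
    (δs : ℝ) (hδs : δs ∈ Set.Icc (-1 : ℝ) 1)
    (hδsopt : f' (m + ρ * δs) = yr / ρ) :
    (∀ δ ∈ Set.Icc (-1 : ℝ) 1, r δs ≤ r δ ∧ r δ ≤ 0) ∧
    (∀ x ∈ Set.Icc xl xu, ∃ ε ∈ Set.Icc (-1 : ℝ) 1,
      f x = ym + (1 / 2) * r δs + yr * ((x - m) / ρ) + (1 / 2) * |r δs| * ε) := by
  have hmem : ∀ δ ∈ Set.Icc (-1 : ℝ) 1, m + ρ * δ ∈ Set.Icc xl xu := by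
    rintro δ ⟨h1, h2⟩
    constructor <;> nlinarith
  have hbmem : m + ρ * δs ∈ Set.Icc xl xu := hmem δs hδs
  have hkey : ∀ δ ∈ Set.Icc (-1 : ℝ) 1, r δs ≤ r δ ∧ r δ ≤ 0 := by
    intro δ hδ
    have hamem : m + ρ * δ ∈ Set.Icc xl xu := hmem δ hδ
    constructor
    · -- tangent line at δs
      have hd : HasDerivAt f (yr / ρ) (m + ρ * δs) := by
        have := hderiv _ hbmem; rwa [hδsopt] at this
      have ht := tangent_line_le hconv hbmem hamem hd
      rw [hrdef δ, hrdef δs]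
      have hρ' : ρ ≠ 0 := ne_of_gt hρpos
      have : yr / ρ * ((m + ρ * δ) - (m + ρ * δs)) = yr * (δ - δs) := by
        field_simp; ring
      rw [this] at ht
      linarith
    · -- convexity: below the chord
      have hxl : xl ∈ Set.Icc xl xu := by constructor <;> nlinarith
      have hxu : xu ∈ Set.Icc xl xu := by constructor <;> nlinarith
      have ht1 : (0:ℝ) ≤ (1 - δ) / 2 := by rcases hδ with ⟨_, h2⟩; linarith
      have ht2 : (0:ℝ) ≤ (1 + δ) / 2 := by rcases hδ with ⟨h1, _⟩; linarith
      have hsum : (1 - δ) / 2 + (1 + δ) / 2 = 1 := by ring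
      have := hconv.2 hxl hxu ht1 ht2 hsum
      simp only [smul_eq_mul] at this
      have hx : (1 - δ) / 2 * xl + (1 + δ) / 2 * xu = m + ρ * δ := by
        rw [hm, hρ]; ring
      rw [hx] at this
      rw [hrdef δ]
      nlinarith [this]
  refine ⟨hkey, ?_⟩
  intro x hx
  set δ : ℝ := (x - m) / ρ with hδdef
  have hρ' : ρ ≠ 0 := ne_of_gt hρpos
  have hxδ : m + ρ * δ = x := by rw [hδdef]; field_simp; ring
  have hδmem : δ ∈ Set.Icc (-1 : ℝ) 1 := by
    rcases hx with ⟨h1, h2⟩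
    constructor
    · rw [hδdef, le_div_iff₀ hρpos]; nlinarith
    · rw [hδdef, div_le_iff₀ hρpos]; nlinarith
  obtain ⟨hlo, hhi⟩ := hkey δ hδmem
  have hs0 : r δs ≤ 0 := (hkey δs hδs).2
  have habs : |r δs| = -(r δs) := abs_of_nonpos hs0
  have hfx : f x = ym + yr * δ + r δ := by
    have := hrdef δ; rw [hxδ] at this; linarith
  by_cases h0 : r δs = 0
  · refine ⟨0, by constructor <;> norm_num, ?_⟩
    have : r δ = 0 := le_antisymm hhi (h0 ▸ hlo)
    rw [hfx, habs, h0, this]; ring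
  · have hneg : r δs < 0 := lt_of_le_of_ne hs0 h0
    have hpos : 0 < -(r δs) := by linarith
    refine ⟨(2 * r δ - r δs) / (-(r δs)), ⟨?_, ?_⟩, ?_⟩
    · rw [le_div_iff₀ hpos]; linarith
    · rw [div_le_one hpos]; linarith
    · rw [hfx, habs]; field_simp; ring
end

section
/- Let [x] = [x̲, x̄] ⊂ ℝ have midpoint m and radius ρ > 0 with |m| < ρ (so 0 is in the interior of [x]). Then for every x ∈ [x], there exists ε ∈ [-1,1] such that |x| = (m/ρ)·x + ((ρ² - m²)/(2ρ))·(1 + ε). -/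
theorem abs_inclusion (m ρ : ℝ) (hρ : 0 < ρ) (hm : |m| < ρ) :
    ∀ x ∈ Set.Icc (m - ρ) (m + ρ), ∃ ε ∈ Set.Icc (-1 : ℝ) 1,
      |x| = (m / ρ) * x + ((ρ ^ 2 - m ^ 2) / (2 * ρ)) * (1 + ε) := by
  intro x hx
  obtain ⟨hx1, hx2⟩ := hx
  have hmρ := abs_lt.mp hm
  have hc : (0:ℝ) < (ρ ^ 2 - m ^ 2) / (2 * ρ) := by
    apply div_pos
    · nlinarith [hmρ.1, hmρ.2]
    · linarith
  set c := (ρ ^ 2 - m ^ 2) / (2 * ρ) with hcdef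
  refine ⟨(|x| - (m / ρ) * x) / c - 1, ⟨?_, ?_⟩, ?_⟩
  · -- ε ≥ -1 ⇔ |x| - (m/ρ)x ≥ 0
    have h1 : (0:ℝ) ≤ |x| - (m / ρ) * x := by
      have : m * x ≤ ρ * |x| := by
        calc m * x ≤ |m * x| := le_abs_self _
        _ = |m| * |x| := abs_mul m x
        _ ≤ ρ * |x| := by apply mul_le_mul_of_nonneg_right hm.le (abs_nonneg x)
      rw [div_mul_eq_mul_div, sub_nonneg, div_le_iff₀ hρ]
      calc m * x ≤ ρ * |x| := this
      _ = |x| * ρ := mul_comm _ _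
    have := div_nonneg h1 hc.le
    linarith
  · -- ε ≤ 1 ⇔ |x| - (m/ρ)x ≤ 2c
    have key : ρ * |x| - m * x ≤ ρ ^ 2 - m ^ 2 := by
      rcases abs_cases x with ⟨h, _⟩ | ⟨h, _⟩ <;> rw [h] <;> nlinarith [hmρ.1, hmρ.2]
    have h2 : |x| - (m / ρ) * x ≤ 2 * c := by
      have e : 2 * c = (ρ ^ 2 - m ^ 2) / ρ := by rw [hcdef]; field_simp
      rw [e, sub_le_iff_le_add, div_mul_eq_mul_div, ← add_div, le_div_iff₀ hρ]
      nlinarith [key]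
    have h4 : (|x| - (m / ρ) * x) / c ≤ 2 := (div_le_iff₀ hc).mpr (by linarith)
    linarith
  · field_simp
    ring
end
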